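/- arXiv:1004.1363 — 3 statements merged into one kernel-verified Lean document; each statement's English description precedes it below -/
import Mathlib

section
/- If S ∈ S¹(I,L), then the Lebesgue measure of the maximal invariant set C_S is zero, provided that the sum of the lengths |I₁| + ⋯ + |I_k| is strictly less than |L| and the nonlinearity N(S) is sufficiently small (depending only on the ratios |I_j|/|L|). -/
open Set MeasureTheory Real

lemma meas_inter_preimage {s t : Set ℝ} {f : ℝ → ℝ} (hs : MeasurableSet s)
    (hf : ContinuousOn f s) (ht : MeasurableSet t) : MeasurableSet (s ∩ f ⁻¹' t) := by
  have h1 : MeasurableSet ((s.restrict f) ⁻¹' t) :=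
    (hf.restrict.measurable) ht
  have h2 : Subtype.val '' ((s.restrict f) ⁻¹' t) = s ∩ f ⁻¹' t := by
    ext x
    constructor
    · rintro ⟨⟨y, hy⟩, hmem, rfl⟩; exact ⟨hy, hmem⟩
    · rintro ⟨h1, h2⟩; exact ⟨⟨x, h1⟩, h2, rfl⟩
  rw [← h2]
  exact hs.subtype_image h1

lemma branch_bound {aj bj c d ε : ℝ} (hab : aj < bj) (hcd : c < d) {S S' : ℝ → ℝ}
    (hder : ∀ x ∈ Icc aj bj, HasDerivAt S (S' x) x)
    (hpos : ∀ x ∈ Icc aj bj, 1 < S' x)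
    (himg : S '' Icc aj bj = Icc c d)
    (hlog : ∀ x ∈ Icc aj bj, ∀ y ∈ Icc aj bj, Real.log (S' x / S' y) ≤ ε)
    {A : Set ℝ} (hA : MeasurableSet A) (hAs : A ⊆ Icc aj bj) :
    volume A ≤ ENNReal.ofReal (Real.exp ε * ((bj - aj) / (d - c))) * volume (S '' A) := by
  have hcont : ContinuousOn S (Icc aj bj) := fun x hx =>
    (hder x hx).continuousAt.continuousWithinAt
  have hmono : StrictMonoOn S (Icc aj bj) := by
    apply strictMonoOn_of_deriv_pos (convex_Icc _ _) hcont
    intro x hx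
    rw [interior_Icc] at hx
    have hx' : x ∈ Icc aj bj := Ioo_subset_Icc_self hx
    rw [(hder x hx').deriv]
    linarith [hpos x hx']
  obtain ⟨u, hu, hSu⟩ : ∃ u ∈ Icc aj bj, S u = c := by
    have : c ∈ S '' Icc aj bj := himg ▸ left_mem_Icc.2 hcd.le
    obtain ⟨u, hu, hSu⟩ := this; exact ⟨u, hu, hSu⟩
  obtain ⟨v, hv, hSv⟩ : ∃ v ∈ Icc aj bj, S v = d := by
    have : d ∈ S '' Icc aj bj := himg ▸ right_mem_Icc.2 hcd.le
    obtain ⟨v, hv, hSv⟩ := this; exact ⟨v, hv, hSv⟩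
  have huv : u < v := by
    by_contra hle
    push_neg at hle
    rcases eq_or_lt_of_le hle with h | h
    · rw [h, hSu] at hSv; linarith
    · have := hmono hv hu h; rw [hSu, hSv] at this; linarith
  obtain ⟨ξ, hξ, hξd⟩ := exists_hasDerivAt_eq_slope S S' huv
    (hcont.mono (Icc_subset_Icc hu.1 hv.2))
    (fun x hx => hder x ⟨le_trans hu.1 hx.1.le, le_trans hx.2.le hv.2⟩)
  have hξmem : ξ ∈ Icc aj bj := ⟨le_trans hu.1 hξ.1.le, le_trans hξ.2.le hv.2⟩
  have hslope : (d - c) / (bj - aj) ≤ S' ξ := by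
    rw [hξd, hSu, hSv]
    apply div_le_div_of_nonneg_left (by linarith) (by linarith) (by linarith [hu.1, hv.2])
  set lam : ℝ := Real.exp (-ε) * ((d - c) / (bj - aj)) with hlam_def
  have hlam_pos : 0 < lam := mul_pos (Real.exp_pos _) (div_pos (by linarith) (by linarith))
  have hlow : ∀ x ∈ Icc aj bj, lam ≤ S' x := by
    intro x hx
    have h1 : Real.log (S' ξ / S' x) ≤ ε := hlog ξ hξmem x hx
    have hξpos : 0 < S' ξ := lt_trans one_pos (hpos ξ hξmem)
    have hxpos : 0 < S' x := lt_trans one_pos (hpos x hx)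
    have h2 : S' ξ / S' x ≤ Real.exp ε := by
      have := Real.exp_le_exp.2 h1
      rwa [Real.exp_log (div_pos hξpos hxpos)] at this
    have h3 : S' ξ ≤ Real.exp ε * S' x := by
      rw [div_le_iff₀ hxpos] at h2; linarith
    have h4 : Real.exp (-ε) * S' ξ ≤ S' x := by
      rw [Real.exp_neg]
      rw [inv_mul_le_iff₀ (Real.exp_pos _)]
      exact h3
    calc lam ≤ Real.exp (-ε) * S' ξ := by
          apply mul_le_mul_of_nonneg_left hslope (Real.exp_pos _).le
      _ ≤ S' x := h4
  have hderW : ∀ x ∈ A, HasDerivWithinAt S (S' x) A x :=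
    fun x hx => (hder x (hAs hx)).hasDerivWithinAt
  have hinj : InjOn S A := (hmono.injOn).mono hAs
  have hcov : (∫⁻ x in A, ENNReal.ofReal |S' x|) ≤ volume (S '' A) := by
    have := MeasureTheory.lintegral_abs_det_fderiv_le_addHaar_image volume hA
      (fun x hx => (hderW x hx).hasFDerivWithinAt) hinj
    simpa only [ContinuousLinearMap.det_toSpanSingleton] using this
  have hconst : ENNReal.ofReal lam * volume A ≤ ∫⁻ x in A, ENNReal.ofReal |S' x| := by
    rw [← MeasureTheory.setLIntegral_const A (ENNReal.ofReal lam)]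
    apply MeasureTheory.setLIntegral_mono' hA
    intro x hx
    exact ENNReal.ofReal_le_ofReal (le_trans (hlow x (hAs hx)) (le_abs_self _))
  have hkey : ENNReal.ofReal lam * volume A ≤ volume (S '' A) := le_trans hconst hcov
  have hlam_ne : ENNReal.ofReal lam ≠ 0 := by
    simp [ENNReal.ofReal_eq_zero, not_le, hlam_pos]
  have hinv : (ENNReal.ofReal lam)⁻¹ = ENNReal.ofReal (Real.exp ε * ((bj - aj) / (d - c))) := by
    rw [← ENNReal.ofReal_inv_of_pos hlam_pos]
    congr 1
    rw [hlam_def, mul_inv, Real.exp_neg, inv_inv, inv_div]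
  calc volume A = (ENNReal.ofReal lam)⁻¹ * (ENNReal.ofReal lam * volume A) := by
        rw [← mul_assoc, ENNReal.inv_mul_cancel hlam_ne ENNReal.ofReal_ne_top, one_mul]
    _ ≤ (ENNReal.ofReal lam)⁻¹ * volume (S '' A) := mul_le_mul_right hkey _
    _ = ENNReal.ofReal (Real.exp ε * ((bj - aj) / (d - c))) * volume (S '' A) := by rw [hinv]

/-- If Σ|I_j| < |L| and the nonlinearity N(S) is sufficiently
small (depending only on the ratios |I_j|/|L|), then the Lebesgue measure
of the maximal invariant set C_S is zero. -/
theorem maximal_invariant_set_measure_zero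
    (k : ℕ) (hk : 2 ≤ k) (a b : Fin k → ℝ) (hab : ∀ j, a j < b j)
    (c d : ℝ) (hcd : c < d)
    (hdisj : ∀ i j : Fin k, i ≠ j →
      Disjoint (Set.Icc (a i) (b i)) (Set.Icc (a j) (b j)))
    (hsub : (⋃ j, Set.Icc (a j) (b j)) ⊆ Set.Icc c d)
    (hsum : (∑ j, (b j - a j)) < d - c) :
    ∃ ε > 0, ∀ S S' : ℝ → ℝ,
      (∀ x ∈ ⋃ j, Set.Icc (a j) (b j), HasDerivAt S (S' x) x) →
      ContinuousOn S' (⋃ j, Set.Icc (a j) (b j)) →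
      (∀ x ∈ ⋃ j, Set.Icc (a j) (b j), 1 < S' x) →
      (∀ j, S '' Set.Icc (a j) (b j) = Set.Icc c d) →
      (∀ j : Fin k, ∀ x ∈ Set.Icc (a j) (b j), ∀ y ∈ Set.Icc (a j) (b j),
        Real.log (S' x / S' y) ≤ ε) →
      MeasureTheory.volume {x ∈ ⋃ j, Set.Icc (a j) (b j) |
        ∀ n : ℕ, S^[n] x ∈ ⋃ j, Set.Icc (a j) (b j)} = 0 := by
  classical
  have hkne : Nonempty (Fin k) := ⟨⟨0, by omega⟩⟩
  set I : Set ℝ := ⋃ j, Set.Icc (a j) (b j) with hI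
  set ρ : ℝ := (∑ j, (b j - a j)) / (d - c) with hρ
  have hsum_pos : 0 < ∑ j, (b j - a j) :=
    Finset.sum_pos (fun j _ => by linarith [hab j]) Finset.univ_nonempty
  have hρ0 : 0 < ρ := div_pos hsum_pos (by linarith)
  have hρ1 : ρ < 1 := (div_lt_one (by linarith)).2 hsum
  set θ : ℝ := (1 + ρ) / 2 with hθ
  have hθρ : ρ < θ := by rw [hθ]; linarith
  have hθ1 : θ < 1 := by rw [hθ]; linarith
  have hθ0 : 0 < θ := by rw [hθ]; linarith
  refine ⟨Real.log (θ / ρ), Real.log_pos (by rw [lt_div_iff₀ hρ0]; linarith), ?_⟩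
  intro S S' hder hcontS' hpos himg hlog
  set ε : ℝ := Real.log (θ / ρ) with hε
  have hexpε : Real.exp ε = θ / ρ := Real.exp_log (div_pos hθ0 hρ0)
  have hderj : ∀ j : Fin k, ∀ x ∈ Icc (a j) (b j), HasDerivAt S (S' x) x :=
    fun j x hx => hder x (Set.mem_iUnion.2 ⟨j, hx⟩)
  have hposj : ∀ j : Fin k, ∀ x ∈ Icc (a j) (b j), 1 < S' x :=
    fun j x hx => hpos x (Set.mem_iUnion.2 ⟨j, hx⟩)
  have hcontj : ∀ j : Fin k, ContinuousOn S (Icc (a j) (b j)) :=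
    fun j x hx => ((hderj j) x hx).continuousAt.continuousWithinAt
  -- the sets of points staying in I for the first n iterates
  set C : ℕ → Set ℝ := fun n => {x | ∀ i ≤ n, S^[i] x ∈ I} with hC
  have hC0 : C 0 = I := by
    ext x
    simp only [hC, mem_setOf_eq, Nat.le_zero, forall_eq, Function.iterate_zero, id]
  have hmemC : ∀ n x, x ∈ C (n + 1) ↔ x ∈ I ∧ S x ∈ C n := by
    intro n x
    constructor
    · intro h
      refine ⟨by simpa using h 0 (Nat.zero_le _), fun i hi => ?_⟩
      have := h (i + 1) (by omega)
      rwa [Function.iterate_succ_apply] at this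
    · rintro ⟨h0, h1⟩ i hi
      match i with
      | 0 => simpa using h0
      | (j + 1) => rw [Function.iterate_succ_apply]; exact h1 j (by omega)
  have hCsucc : ∀ n, C (n + 1) = ⋃ j, (Icc (a j) (b j) ∩ S ⁻¹' (C n)) := by
    intro n
    ext x
    rw [hmemC n x]
    simp only [mem_iUnion, mem_inter_iff, mem_preimage, hI, exists_and_right]
  have hmeasI : MeasurableSet I := MeasurableSet.iUnion fun j => measurableSet_Icc
  have hmeasC : ∀ n, MeasurableSet (C n) := by
    intro n
    induction n with
    | zero => rw [hC0]; exact hmeasI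
    | succ n ih =>
      rw [hCsucc n]
      exact MeasurableSet.iUnion fun j =>
        meas_inter_preimage measurableSet_Icc (hcontj j) ih
  -- the key contraction estimate
  have key : ∀ n, volume (C (n + 1)) ≤ ENNReal.ofReal θ * volume (C n) := by
    intro n
    rw [hCsucc n]
    calc volume (⋃ j, (Icc (a j) (b j) ∩ S ⁻¹' (C n)))
        ≤ ∑ j, volume (Icc (a j) (b j) ∩ S ⁻¹' (C n)) :=
          measure_iUnion_fintype_le _ _
      _ ≤ ∑ j, ENNReal.ofReal (Real.exp ε * ((b j - a j) / (d - c))) * volume (C n) := by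
          apply Finset.sum_le_sum
          intro j _
          have hAmeas : MeasurableSet (Icc (a j) (b j) ∩ S ⁻¹' (C n)) :=
            meas_inter_preimage measurableSet_Icc (hcontj j) (hmeasC n)
          have hb := branch_bound (hab j) hcd (hderj j) (hposj j) (himg j) (hlog j)
            hAmeas inter_subset_left
          refine le_trans hb (mul_le_mul_right ?_ _)
          apply measure_mono
          rintro y ⟨x, ⟨hx1, hx2⟩, rfl⟩
          exact hx2
      _ = ENNReal.ofReal θ * volume (C n) := by
          rw [← Finset.sum_mul]
          congr 1
          rw [← ENNReal.ofReal_sum_of_nonneg (fun j _ => mul_nonneg (Real.exp_pos _).le (div_nonneg (by linarith [hab j]) (by linarith)))]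
          congr 1
          rw [← Finset.mul_sum, ← Finset.sum_div, ← hρ, hexpε,
            div_mul_cancel₀ _ hρ0.ne']
  have bound : ∀ n, volume (C n) ≤ (ENNReal.ofReal θ) ^ n * ENNReal.ofReal (d - c) := by
    intro n
    induction n with
    | zero =>
      rw [hC0, pow_zero, one_mul]
      calc volume I ≤ volume (Icc c d) := measure_mono hsub
        _ = ENNReal.ofReal (d - c) := Real.volume_Icc
    | succ n ih =>
      calc volume (C (n + 1)) ≤ ENNReal.ofReal θ * volume (C n) := key n
        _ ≤ ENNReal.ofReal θ * ((ENNReal.ofReal θ) ^ n * ENNReal.ofReal (d - c)) :=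
            mul_le_mul_right ih _
        _ = (ENNReal.ofReal θ) ^ (n + 1) * ENNReal.ofReal (d - c) := by ring
  have hTsub : ∀ n, {x ∈ I | ∀ m : ℕ, S^[m] x ∈ I} ⊆ C n :=
    fun n x hx i _ => hx.2 i
  have htends : Filter.Tendsto (fun n => (ENNReal.ofReal θ) ^ n * ENNReal.ofReal (d - c))
      Filter.atTop (nhds 0) := by
    have h1 : Filter.Tendsto (fun n : ℕ => (ENNReal.ofReal θ) ^ n) Filter.atTop (nhds 0) :=
      ENNReal.tendsto_pow_atTop_nhds_zero_of_lt_one (by rwa [ENNReal.ofReal_lt_one])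
    simpa using ENNReal.Tendsto.mul_const h1 (Or.inr ENNReal.ofReal_ne_top)
  have hle : volume {x ∈ I | ∀ m : ℕ, S^[m] x ∈ I} ≤ 0 :=
    ge_of_tendsto' htends fun n => le_trans (measure_mono (hTsub n)) (bound n)
  exact le_antisymm hle zero_le
end

section
/- The map sending a point x ∈ C_S to its itinerary (j₀, j₁, j₂, …), where Sⁿ(x) ∈ I_{jₙ}, is a homeomorphism from C_S onto the full one-sided shift space {1,…,k}^ℕ, conjugating S|_{C_S} to the shift map. -/
open Set

private def nestSet (S : ℝ → ℝ) : ℕ → (ℕ → Set ℝ) → Set ℝ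
  | 0, A => A 0
  | n+1, A => A 0 ∩ S ⁻¹' (nestSet S n (fun m => A (m+1)))

private lemma mem_nestSet (S : ℝ → ℝ) :
    ∀ (n : ℕ) (A : ℕ → Set ℝ) (x : ℝ),
      x ∈ nestSet S n A ↔ ∀ m ≤ n, S^[m] x ∈ A m := by
  intro n
  induction n with
  | zero =>
    intro A x
    simp only [nestSet]
    constructor
    · intro h m hm
      obtain rfl : m = 0 := Nat.le_zero.mp hm
      simpa using h
    · intro h; simpa using h 0 le_rfl
  | succ n ih =>
    intro A x
    simp only [nestSet, mem_inter_iff, mem_preimage, ih]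
    constructor
    · rintro ⟨h0, h1⟩ m hm
      cases m with
      | zero => simpa using h0
      | succ m =>
        have := h1 m (Nat.succ_le_succ_iff.mp hm)
        rwa [Function.iterate_succ_apply]
    · intro h
      refine ⟨by simpa using h 0 (Nat.zero_le _), fun m hm => ?_⟩
      have := h (m+1) (Nat.succ_le_succ hm)
      rwa [Function.iterate_succ_apply] at this

private lemma nestSet_isCompact (S : ℝ → ℝ) :
    ∀ (n : ℕ) (A : ℕ → Set ℝ), (∀ m, IsCompact (A m)) →
      (∀ m, ContinuousOn S (A m)) → IsCompact (nestSet S n A) := by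
  intro n
  induction n with
  | zero => intro A hA _; exact hA 0
  | succ n ih =>
    intro A hA hS
    have hc := ih (fun m => A (m+1)) (fun m => hA (m+1)) (fun m => hS (m+1))
    have hclosed : IsClosed (A 0 ∩ S ⁻¹' nestSet S n (fun m => A (m+1))) :=
      (hS 0).preimage_isClosed_of_isClosed (hA 0).isClosed hc.isClosed
    exact IsCompact.of_isClosed_subset (hA 0) hclosed inter_subset_left

/-- The itinerary map x ↦ (j₀, j₁, …), where Sⁿ(x) ∈ I_{jₙ},
is a homeomorphism from C_S onto the full one-sided shift {1,…,k}^ℕ,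
conjugating S|_{C_S} to the shift map. -/
theorem itinerary_homeomorphism
    (k : ℕ) (hk : 2 ≤ k) (a b : Fin k → ℝ) (hab : ∀ j, a j < b j)
    (c d : ℝ) (hcd : c < d)
    (hdisj : ∀ i j : Fin k, i ≠ j →
      Disjoint (Set.Icc (a i) (b i)) (Set.Icc (a j) (b j)))
    (hsub : (⋃ j, Set.Icc (a j) (b j)) ⊆ Set.Icc c d)
    (S S' : ℝ → ℝ)
    (hderiv : ∀ x ∈ ⋃ j, Set.Icc (a j) (b j), HasDerivAt S (S' x) x)
    (hcont : ContinuousOn S' (⋃ j, Set.Icc (a j) (b j)))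
    (hexp : ∀ x ∈ ⋃ j, Set.Icc (a j) (b j), 1 < S' x)
    (himg : ∀ j, S '' Set.Icc (a j) (b j) = Set.Icc c d) :
    ∃ h : {x : ℝ // x ∈ {y ∈ ⋃ j, Set.Icc (a j) (b j) |
        ∀ n : ℕ, S^[n] y ∈ ⋃ j, Set.Icc (a j) (b j)}} ≃ₜ (ℕ → Fin k),
      (∀ x : {x : ℝ // x ∈ {y ∈ ⋃ j, Set.Icc (a j) (b j) |
          ∀ n : ℕ, S^[n] y ∈ ⋃ j, Set.Icc (a j) (b j)}},
        ∀ n : ℕ, S^[n] (x : ℝ) ∈ Set.Icc (a (h x n)) (b (h x n))) ∧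
      (∀ x : {x : ℝ // x ∈ {y ∈ ⋃ j, Set.Icc (a j) (b j) |
          ∀ n : ℕ, S^[n] y ∈ ⋃ j, Set.Icc (a j) (b j)}},
        ∀ hSx : S (x : ℝ) ∈ {y ∈ ⋃ j, Set.Icc (a j) (b j) |
          ∀ n : ℕ, S^[n] y ∈ ⋃ j, Set.Icc (a j) (b j)},
        h ⟨S (x : ℝ), hSx⟩ = fun n => h x (n + 1)) := by
  classical
  set U : Set ℝ := ⋃ j, Set.Icc (a j) (b j) with hU
  set C : Set ℝ := {y ∈ U | ∀ n : ℕ, S^[n] y ∈ U} with hC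
  -- basic facts
  have hUc : IsCompact U := isCompact_iUnion fun j => isCompact_Icc
  have hj0 : 0 < k := by omega
  have hUne : U.Nonempty := ⟨a ⟨0, hj0⟩, mem_iUnion.mpr ⟨⟨0, hj0⟩, le_rfl, (hab _).le⟩⟩
  have hIU : ∀ j : Fin k, Set.Icc (a j) (b j) ⊆ U := fun j => subset_iUnion (fun j => Set.Icc (a j) (b j)) j
  have hScontAt : ∀ x ∈ U, ContinuousAt S x := fun x hx => (hderiv x hx).continuousAt
  have hScontOn : ∀ s : Set ℝ, s ⊆ U → ContinuousOn S s :=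
    fun s hs x hx => (hScontAt x (hs hx)).continuousWithinAt
  have huniq : ∀ (i j : Fin k) (x : ℝ), x ∈ Set.Icc (a i) (b i) → x ∈ Set.Icc (a j) (b j) → i = j := by
    intro i j x hi hj
    by_contra hne
    exact (hdisj i j hne).le_bot ⟨hi, hj⟩
  -- uniform expansion constant
  obtain ⟨x₀, hx₀U, hmin⟩ := hUc.exists_isMinOn hUne hcont
  set lam := S' x₀ with hlamdef
  have hlam1 : 1 < lam := hexp x₀ hx₀U
  have hlam : ∀ x ∈ U, lam ≤ S' x := fun x hx => hmin hx
  have hlam0 : 0 ≤ lam := by linarith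
  have hexpand : ∀ (j : Fin k), ∀ x ∈ Set.Icc (a j) (b j), ∀ y ∈ Set.Icc (a j) (b j),
      lam * |x - y| ≤ |S x - S y| := by
    have key : ∀ (j : Fin k), ∀ x ∈ Set.Icc (a j) (b j), ∀ y ∈ Set.Icc (a j) (b j),
        x ≤ y → lam * (y - x) ≤ S y - S x := by
      intro j
      refine (convex_Icc (a j) (b j)).mul_sub_le_image_sub_of_le_deriv
        (hScontOn _ (hIU j)) ?_ ?_
      · intro x hx
        exact ((hderiv x (hIU j (interior_subset hx))).differentiableAt).differentiableWithinAt
      · intro x hx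
        rw [(hderiv x (hIU j (interior_subset hx))).deriv]
        exact hlam x (hIU j (interior_subset hx))
    intro j x hx y hy
    rcases le_total x y with h | h
    · have h1 := key j x hx y hy h
      have h2 : |x - y| = y - x := by rw [abs_sub_comm]; exact abs_of_nonneg (by linarith)
      have h3 : S y - S x ≤ |S x - S y| := by rw [abs_sub_comm]; exact le_abs_self _
      rw [h2]; linarith
    · have h1 := key j y hy x hx h
      have h2 : |x - y| = x - y := abs_of_nonneg (by linarith)
      have h3 : S x - S y ≤ |S x - S y| := le_abs_self _
      rw [h2]; linarith
  have hdiam : ∀ u v : ℝ, u ∈ Set.Icc c d → v ∈ Set.Icc c d → |u - v| ≤ d - c := by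
    intro u v hu hv
    rw [abs_sub_le_iff]
    exact ⟨by linarith [hu.1, hu.2, hv.1, hv.2], by linarith [hu.1, hu.2, hv.1, hv.2]⟩
  -- the itinerary map
  have hmemU : ∀ x : {x : ℝ // x ∈ C}, ∀ n : ℕ, S^[n] (x : ℝ) ∈ U := fun x n => x.2.2 n
  let itin : {x : ℝ // x ∈ C} → ℕ → Fin k := fun x n => (mem_iUnion.mp (hmemU x n)).choose
  have hspec : ∀ (x : {x : ℝ // x ∈ C}) (n : ℕ),
      S^[n] (x : ℝ) ∈ Set.Icc (a (itin x n)) (b (itin x n)) :=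
    fun x n => (mem_iUnion.mp (hmemU x n)).choose_spec
  have hitin_eq : ∀ (x : {x : ℝ // x ∈ C}) (n : ℕ) (j : Fin k),
      S^[n] (x : ℝ) ∈ Set.Icc (a j) (b j) → itin x n = j :=
    fun x n j hj => huniq _ _ _ (hspec x n) hj
  -- injectivity
  have hinj : Function.Injective itin := by
    intro x y hxy
    apply Subtype.ext
    by_contra hne
    have hpos : 0 < |(x : ℝ) - (y : ℝ)| := abs_pos.mpr (sub_ne_zero.mpr hne)
    have hgrow : ∀ n, lam ^ n * |(x : ℝ) - (y : ℝ)| ≤ |S^[n] (x : ℝ) - S^[n] (y : ℝ)| := by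
      intro n
      induction n with
      | zero => simp
      | succ n ih =>
        have h1 := hspec x n
        have h2 : S^[n] (y : ℝ) ∈ Set.Icc (a (itin x n)) (b (itin x n)) := by
          have := hspec y n
          rwa [← hxy] at this
        have step := hexpand (itin x n) _ h1 _ h2
        calc lam ^ (n+1) * |(x : ℝ) - (y : ℝ)|
            = lam * (lam ^ n * |(x : ℝ) - (y : ℝ)|) := by ring
          _ ≤ lam * |S^[n] (x : ℝ) - S^[n] (y : ℝ)| := by
              exact mul_le_mul_of_nonneg_left ih hlam0
          _ ≤ |S (S^[n] (x : ℝ)) - S (S^[n] (y : ℝ))| := step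
          _ = |S^[n+1] (x : ℝ) - S^[n+1] (y : ℝ)| := by
              rw [Function.iterate_succ_apply', Function.iterate_succ_apply']
    obtain ⟨n, hn⟩ := pow_unbounded_of_one_lt ((d - c) / |(x : ℝ) - (y : ℝ)|) hlam1
    have hb := hgrow n
    have hdc := hdiam _ _ (hsub (hmemU x n)) (hsub (hmemU y n))
    have : d - c < lam ^ n * |(x : ℝ) - (y : ℝ)| := (div_lt_iff₀ hpos).mp hn
    linarith
  -- surjectivity
  have hpre : ∀ (j : Fin k) (y : ℝ), y ∈ Set.Icc c d → ∃ x ∈ Set.Icc (a j) (b j), S x = y := by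
    intro j y hy
    rw [← himg j] at hy
    obtain ⟨x, hx, hSx⟩ := hy
    exact ⟨x, hx, hSx⟩
  have hne_chain : ∀ (n : ℕ) (ω : ℕ → Fin k),
      ∃ x, ∀ m ≤ n, S^[m] x ∈ Set.Icc (a (ω m)) (b (ω m)) := by
    intro n
    induction n with
    | zero =>
      intro ω
      refine ⟨a (ω 0), fun m hm => ?_⟩
      obtain rfl : m = 0 := Nat.le_zero.mp hm
      simpa using (⟨le_rfl, (hab _).le⟩ : a (ω 0) ∈ Set.Icc (a (ω 0)) (b (ω 0)))
    | succ n ih =>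
      intro ω
      obtain ⟨y, hy⟩ := ih (fun m => ω (m + 1))
      have hy0 : y ∈ Set.Icc (a (ω 1)) (b (ω 1)) := by simpa using hy 0 (Nat.zero_le _)
      have hyI : y ∈ Set.Icc c d := hsub (hIU (ω 1) hy0)
      obtain ⟨x, hxI, hSx⟩ := hpre (ω 0) y hyI
      refine ⟨x, fun m hm => ?_⟩
      cases m with
      | zero => simpa using hxI
      | succ m =>
        rw [Function.iterate_succ_apply, hSx]
        exact hy m (Nat.succ_le_succ_iff.mp hm)
  have hsurj : ∀ ω : ℕ → Fin k, ∃ x : {x : ℝ // x ∈ C}, itin x = ω := by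
    intro ω
    have hcomp : ∀ n, IsCompact (nestSet S n (fun m => Set.Icc (a (ω m)) (b (ω m)))) :=
      fun n => nestSet_isCompact S n _ (fun m => isCompact_Icc)
        (fun m => hScontOn _ (hIU (ω m)))
    have hnon : ∀ n, (nestSet S n (fun m => Set.Icc (a (ω m)) (b (ω m)))).Nonempty := by
      intro n
      obtain ⟨x, hx⟩ := hne_chain n ω
      exact ⟨x, (mem_nestSet S n _ x).mpr hx⟩
    have hdec : ∀ n, nestSet S (n+1) (fun m => Set.Icc (a (ω m)) (b (ω m)))
        ⊆ nestSet S n (fun m => Set.Icc (a (ω m)) (b (ω m))) := by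
      intro n x hx
      rw [mem_nestSet] at hx ⊢
      exact fun m hm => hx m (le_trans hm (Nat.le_succ n))
    obtain ⟨x, hx⟩ := IsCompact.nonempty_iInter_of_sequence_nonempty_isCompact_isClosed
      _ hdec hnon (hcomp 0) (fun n => (hcomp n).isClosed)
    have hxit : ∀ n, S^[n] x ∈ Set.Icc (a (ω n)) (b (ω n)) := by
      intro n
      have := mem_iInter.mp hx n
      exact (mem_nestSet S n _ x).mp this n le_rfl
    have hxC : x ∈ C := by
      refine ⟨?_, fun n => hIU (ω n) (hxit n)⟩
      have := hxit 0
      simp only [Function.iterate_zero, id_eq] at this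
      exact hIU (ω 0) this
    exact ⟨⟨x, hxC⟩, funext fun n => hitin_eq _ n _ (hxit n)⟩
  -- compactness of C
  have hCeq : C = ⋂ n, nestSet S n (fun _ => U) := by
    ext x
    simp only [mem_iInter, mem_nestSet, hC, mem_setOf_eq, mem_sep_iff]
    constructor
    · rintro ⟨hxU, hall⟩ n m _; exact hall m
    · intro h
      constructor
      · have := h 0 0 le_rfl
        simpa using this
      · intro n; exact h n n le_rfl
  have hCcomp : IsCompact C := by
    rw [hCeq]
    have hcomp : ∀ n, IsCompact (nestSet S n (fun _ => U)) :=
      fun n => nestSet_isCompact S n _ (fun _ => hUc) (fun _ => hScontOn _ le_rfl)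
    exact IsCompact.of_isClosed_subset (hcomp 0)
      (isClosed_iInter fun n => (hcomp n).isClosed) (iInter_subset _ 0)
  haveI : CompactSpace {x : ℝ // x ∈ C} := isCompact_iff_compactSpace.mp hCcomp
  -- continuity of the itinerary map
  have hSnCA : ∀ (n : ℕ) (z : ℝ), (∀ m, S^[m] z ∈ U) → ContinuousAt S^[n] z := by
    intro n
    induction n with
    | zero =>
      intro z _
      rw [Function.iterate_zero]
      exact continuousAt_id
    | succ n ih =>
      intro z hz
      rw [Function.iterate_succ]
      refine ContinuousAt.comp (ih (S z) fun m => ?_) (hScontAt z (by simpa using hz 0))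
      rw [← Function.iterate_succ_apply]
      exact hz (m + 1)
  have hcontItin : Continuous itin := by
    apply continuous_pi
    intro n
    have hSn : Continuous (fun x : {x : ℝ // x ∈ C} => S^[n] (x : ℝ)) := by
      rw [continuous_iff_continuousAt]
      intro x
      exact (hSnCA n (x : ℝ) (hmemU x)).comp continuous_subtype_val.continuousAt
    have hfib : ∀ j : Fin k, IsClosed {x : {x : ℝ // x ∈ C} | itin x n = j} := by
      intro j
      have heq : {x : {x : ℝ // x ∈ C} | itin x n = j}
          = (fun x : {x : ℝ // x ∈ C} => S^[n] (x : ℝ)) ⁻¹' (Set.Icc (a j) (b j)) := by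
        ext x
        constructor
        · intro hx
          have := hspec x n
          rwa [hx] at this
        · intro hm
          exact hitin_eq x n j hm
      rw [heq]
      exact IsClosed.preimage hSn isClosed_Icc
    have hfibopen : ∀ j : Fin k, IsOpen {x : {x : ℝ // x ∈ C} | itin x n = j} := by
      intro j
      have heq : {x : {x : ℝ // x ∈ C} | itin x n = j}
          = (⋃ i ∈ ({j}ᶜ : Set (Fin k)), {x : {x : ℝ // x ∈ C} | itin x n = i})ᶜ := by
        ext x
        simp only [mem_setOf_eq, mem_compl_iff, mem_iUnion, mem_singleton_iff, exists_prop,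
          not_exists, not_and]
        constructor
        · intro hx i hi hxi
          exact hi (hxi ▸ hx.symm ▸ rfl)
        · intro hx
          by_contra hne
          exact hx (itin x n) (fun hh => hne hh) rfl
      rw [heq]
      rw [isOpen_compl_iff]
      exact Set.Finite.isClosed_biUnion (Set.toFinite _) (fun i _ => hfib i)
    rw [continuous_def]
    intro s _
    have heq : (fun x : {x : ℝ // x ∈ C} => itin x n) ⁻¹' s
        = ⋃ j ∈ s, {x : {x : ℝ // x ∈ C} | itin x n = j} := by
      ext x; simp
    rw [heq]
    exact isOpen_biUnion fun j _ => hfibopen j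
  -- assemble
  let e : {x : ℝ // x ∈ C} ≃ (ℕ → Fin k) := Equiv.ofBijective itin ⟨hinj, hsurj⟩
  have hce : Continuous e := hcontItin
  refine ⟨Continuous.homeoOfEquivCompactToT2 hce, fun x n => hspec x n, ?_⟩
  intro x hSx
  funext n
  show itin ⟨S (x : ℝ), hSx⟩ n = itin x (n + 1)
  apply hitin_eq
  have := hspec x (n + 1)
  rwa [Function.iterate_succ_apply] at this
end

section
/- For S ∈ S¹(I,L) with nonlinearity N(S) ≤ ε, any two cylinder intervals I_w, I_{w'} of the same depth n corresponding to words differing only in the last symbol satisfy e^{-2nε} ≤ (|I_w|/|I_{w'}|) · (|I_{j'_n}|/|I_{j_n}|)^{-1} ≤ e^{2nε}. -/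
open MeasureTheory

private lemma exp_bound_of_log {ε sx sy : ℝ} (hx : 1 < sx) (hy : 1 < sy)
    (h : Real.log (sx / sy) ≤ ε) : sx ≤ Real.exp ε * sy := by
  have hy0 : 0 < sy := lt_trans one_pos hy
  have hx0 : 0 < sx := lt_trans one_pos hx
  have h2 : sx / sy ≤ Real.exp ε := by
    rw [← Real.exp_log (div_pos hx0 hy0)]
    exact Real.exp_le_exp.mpr h
  calc sx = sx / sy * sy := by field_simp
    _ ≤ Real.exp ε * sy := mul_le_mul_of_nonneg_right h2 hy0.le

private lemma deriv_iter {k : ℕ} {a b : Fin k → ℝ} {S S' : ℝ → ℝ}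
    (hderiv : ∀ x ∈ ⋃ j, Set.Icc (a j) (b j), HasDerivAt S (S' x) x) :
    ∀ n x, (∀ m < n, S^[m] x ∈ ⋃ j, Set.Icc (a j) (b j)) →
      HasDerivAt (S^[n]) (∏ m ∈ Finset.range n, S' (S^[m] x)) x := by
  intro n
  induction n with
  | zero => intro x _; simpa using hasDerivAt_id x
  | succ n ih =>
    intro x hx
    have h1 : HasDerivAt S (S' x) x := hderiv x (hx 0 (Nat.succ_pos n))
    have h2 : HasDerivAt (S^[n]) (∏ m ∈ Finset.range n, S' (S^[m] (S x))) (S x) := by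
      apply ih
      intro m hm
      rw [← Function.iterate_succ_apply]
      exact hx (m+1) (by omega)
    have h3 := h2.comp x h1
    rw [Function.iterate_succ]
    refine h3.congr_deriv ?_
    rw [Finset.prod_range_succ']
    simp [Function.iterate_succ_apply]

private lemma mono_endpoints {k : ℕ} {a b : Fin k → ℝ} {c d : ℝ} {S S' : ℝ → ℝ}
    (hab : ∀ j, a j < b j) (hcd : c < d)
    (hderiv : ∀ x ∈ ⋃ j, Set.Icc (a j) (b j), HasDerivAt S (S' x) x)
    (hexp : ∀ x ∈ ⋃ j, Set.Icc (a j) (b j), 1 < S' x)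
    (himg : ∀ j, S '' Set.Icc (a j) (b j) = Set.Icc c d) (j : Fin k) :
    StrictMonoOn S (Set.Icc (a j) (b j)) ∧ S (a j) = c ∧ S (b j) = d := by
  have hmem : ∀ x ∈ Set.Icc (a j) (b j), x ∈ ⋃ j, Set.Icc (a j) (b j) :=
    fun x hx => Set.mem_iUnion.mpr ⟨j, hx⟩
  have hcontS : ContinuousOn S (Set.Icc (a j) (b j)) := fun x hx =>
    ((hderiv x (hmem x hx)).continuousAt).continuousWithinAt
  have hmono : StrictMonoOn S (Set.Icc (a j) (b j)) := by
    apply strictMonoOn_of_deriv_pos (convex_Icc _ _) hcontS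
    intro x hx
    rw [interior_Icc] at hx
    have hx' : x ∈ Set.Icc (a j) (b j) := Set.mem_Icc_of_Ioo hx
    rw [(hderiv x (hmem x hx')).deriv]
    exact lt_trans one_pos (hexp x (hmem x hx'))
  have hmonoOn := hmono.monotoneOn
  refine ⟨hmono, ?_, ?_⟩
  · have hSa_mem : S (a j) ∈ Set.Icc c d := by
      rw [← himg j]; exact ⟨a j, Set.left_mem_Icc.mpr (hab j).le, rfl⟩
    have hc : c ∈ S '' Set.Icc (a j) (b j) := by
      rw [himg j]; exact Set.left_mem_Icc.mpr hcd.le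
    obtain ⟨x₀, hx₀, hSx₀⟩ := hc
    have h1 : S (a j) ≤ c := by
      rw [← hSx₀]
      exact hmonoOn (Set.left_mem_Icc.mpr (hab j).le) hx₀ hx₀.1
    exact le_antisymm h1 hSa_mem.1
  · have hSb_mem : S (b j) ∈ Set.Icc c d := by
      rw [← himg j]; exact ⟨b j, Set.right_mem_Icc.mpr (hab j).le, rfl⟩
    have hd : d ∈ S '' Set.Icc (a j) (b j) := by
      rw [himg j]; exact Set.right_mem_Icc.mpr hcd.le
    obtain ⟨x₀, hx₀, hSx₀⟩ := hd
    have h1 : d ≤ S (b j) := by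
      rw [← hSx₀]
      exact hmonoOn hx₀ (Set.right_mem_Icc.mpr (hab j).le) hx₀.2
    exact le_antisymm hSb_mem.2 h1

private lemma cyl_struct {k : ℕ} {a b : Fin k → ℝ} {c d : ℝ} {S S' : ℝ → ℝ}
    (hab : ∀ j, a j < b j) (hcd : c < d)
    (hsub : (⋃ j, Set.Icc (a j) (b j)) ⊆ Set.Icc c d)
    (hderiv : ∀ x ∈ ⋃ j, Set.Icc (a j) (b j), HasDerivAt S (S' x) x)
    (hexp : ∀ x ∈ ⋃ j, Set.Icc (a j) (b j), 1 < S' x)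
    (himg : ∀ j, S '' Set.Icc (a j) (b j) = Set.Icc c d) :
    ∀ n (w : Fin (n+1) → Fin k), ∃ p q : ℝ, p < q ∧
      Set.Icc p q ⊆ Set.Icc (a (w 0)) (b (w 0)) ∧
      {x : ℝ | ∀ m : Fin (n+1), S^[(m : ℕ)] x ∈ Set.Icc (a (w m)) (b (w m))} = Set.Icc p q ∧
      S^[n+1] p = c ∧ S^[n+1] q = d := by
  have hft := mono_endpoints hab hcd hderiv hexp himg
  intro n
  induction n with
  | zero =>
    intro w
    refine ⟨a (w 0), b (w 0), hab _, subset_rfl, ?_, ?_, ?_⟩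
    · ext x
      simp [Fin.forall_fin_one]
    · simpa using (hft (w 0)).2.1
    · simpa using (hft (w 0)).2.2
  | succ n ih =>
    intro w
    obtain ⟨p, q, hpq, hsubI, hcyl, hp, hq⟩ := ih (fun m => w m.succ)
    set j := w 0 with hj
    obtain ⟨hmono, hSa, hSb⟩ := hft j
    have hIccU : Set.Icc (a (w 1)) (b (w 1)) ⊆ Set.Icc c d :=
      (Set.subset_iUnion (fun j => Set.Icc (a j) (b j)) (w 1)).trans hsub
    have hpq_cd : Set.Icc p q ⊆ Set.Icc c d := by
      refine hsubI.trans ?_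
      have : (fun m : Fin (n+1) => w m.succ) 0 = w 1 := rfl
      rw [this] at *
      exact hIccU
    have hpcd : p ∈ Set.Icc c d := hpq_cd ⟨le_refl p, hpq.le⟩
    have hqcd : q ∈ Set.Icc c d := hpq_cd ⟨hpq.le, le_refl q⟩
    obtain ⟨p', hp'mem, hSp'⟩ : ∃ p' ∈ Set.Icc (a j) (b j), S p' = p := by
      have := hpcd; rw [← himg j] at this; obtain ⟨x, hx, hSx⟩ := this; exact ⟨x, hx, hSx⟩
    obtain ⟨q', hq'mem, hSq'⟩ : ∃ q' ∈ Set.Icc (a j) (b j), S q' = q := by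
      have := hqcd; rw [← himg j] at this; obtain ⟨x, hx, hSx⟩ := this; exact ⟨x, hx, hSx⟩
    have hp'q' : p' < q' := by
      rw [← hmono.lt_iff_lt hp'mem hq'mem, hSp', hSq']; exact hpq
    refine ⟨p', q', hp'q', Set.Icc_subset_Icc hp'mem.1 hq'mem.2, ?_, ?_, ?_⟩
    · ext x
      simp only [Set.mem_setOf_eq]
      constructor
      · intro h
        have h0 : x ∈ Set.Icc (a j) (b j) := by simpa using h 0
        have hSx : S x ∈ Set.Icc p q := by
          rw [← hcyl]
          intro m
          have := h m.succ
          simpa [Function.iterate_succ_apply] using this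
        constructor
        · rw [← hmono.le_iff_le hp'mem h0, hSp']; exact hSx.1
        · rw [← hmono.le_iff_le h0 hq'mem, hSq']; exact hSx.2
      · intro hx
        have hxj : x ∈ Set.Icc (a j) (b j) :=
          Set.Icc_subset_Icc hp'mem.1 hq'mem.2 hx
        have hSx : S x ∈ Set.Icc p q := by
          constructor
          · rw [← hSp']; exact hmono.monotoneOn hp'mem hxj hx.1
          · rw [← hSq']; exact hmono.monotoneOn hxj hq'mem hx.2
        rw [← hcyl] at hSx
        intro m
        induction m using Fin.cases with
        | zero => simpa using hxj
        | succ i =>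
          have := hSx i
          simpa [Function.iterate_succ_apply, Fin.val_succ] using this
    · rw [Function.iterate_succ_apply, hSp', hp]
    · rw [Function.iterate_succ_apply, hSq', hq]

set_option maxHeartbeats 1000000 in
private lemma key {k : ℕ} {a b : Fin k → ℝ} {c d ε : ℝ} {S S' : ℝ → ℝ}
    (hab : ∀ j, a j < b j) (hcd : c < d) (hε : 0 ≤ ε)
    (hsub : (⋃ j, Set.Icc (a j) (b j)) ⊆ Set.Icc c d)
    (hderiv : ∀ x ∈ ⋃ j, Set.Icc (a j) (b j), HasDerivAt S (S' x) x)
    (hexp : ∀ x ∈ ⋃ j, Set.Icc (a j) (b j), 1 < S' x)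
    (himg : ∀ j, S '' Set.Icc (a j) (b j) = Set.Icc c d)
    (hN : ∀ j : Fin k, ∀ x ∈ Set.Icc (a j) (b j), ∀ y ∈ Set.Icc (a j) (b j),
      Real.log (S' x / S' y) ≤ ε)
    (N : ℕ) (w w' : Fin (N+1) → Fin k)
    (hlast : ∀ m : Fin (N+1), (m : ℕ) + 1 < N + 1 → w m = w' m) :
    (volume {x : ℝ | ∀ m : Fin (N+1),
        S^[(m : ℕ)] x ∈ Set.Icc (a (w m)) (b (w m))}).toReal *
      (b (w' (Fin.last N)) - a (w' (Fin.last N)))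
    ≤ Real.exp (2 * (N+1 : ℕ) * ε) *
      (volume {x : ℝ | ∀ m : Fin (N+1),
        S^[(m : ℕ)] x ∈ Set.Icc (a (w' m)) (b (w' m))}).toReal *
      (b (w (Fin.last N)) - a (w (Fin.last N))) := by
  have hmemU : ∀ (j : Fin k) x, x ∈ Set.Icc (a j) (b j) →
      x ∈ ⋃ i, Set.Icc (a i) (b i) := fun j x hx => Set.mem_iUnion.mpr ⟨j, hx⟩
  obtain ⟨p, q, hpq, _, hcylw, hpc, hqd⟩ := cyl_struct hab hcd hsub hderiv hexp himg N w
  obtain ⟨p', q', hpq', _, hcylw', hpc', hqd'⟩ := cyl_struct hab hcd hsub hderiv hexp himg N w'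
  rw [hcylw, hcylw', Real.volume_Icc, Real.volume_Icc,
    ENNReal.toReal_ofReal (by linarith), ENNReal.toReal_ofReal (by linarith)]
  have hmemw : ∀ x ∈ Set.Icc p q, ∀ m : Fin (N+1),
      S^[(m : ℕ)] x ∈ Set.Icc (a (w m)) (b (w m)) := by
    intro x hx; rw [← hcylw] at hx; exact hx
  have hmemw' : ∀ x ∈ Set.Icc p' q', ∀ m : Fin (N+1),
      S^[(m : ℕ)] x ∈ Set.Icc (a (w' m)) (b (w' m)) := by
    intro x hx; rw [← hcylw'] at hx; exact hx
  have hderw : ∀ x ∈ Set.Icc p q,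
      HasDerivAt (S^[N+1]) (∏ m ∈ Finset.range (N+1), S' (S^[m] x)) x := by
    intro x hx
    exact deriv_iter hderiv (N+1) x
      (fun m hm => hmemU _ _ (hmemw x hx ⟨m, hm⟩))
  have hderw' : ∀ x ∈ Set.Icc p' q',
      HasDerivAt (S^[N+1]) (∏ m ∈ Finset.range (N+1), S' (S^[m] x)) x := by
    intro x hx
    exact deriv_iter hderiv (N+1) x
      (fun m hm => hmemU _ _ (hmemw' x hx ⟨m, hm⟩))
  obtain ⟨ξ, hξ, hDξ⟩ := exists_hasDerivAt_eq_slope (S^[N+1])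
    (fun x => ∏ m ∈ Finset.range (N+1), S' (S^[m] x)) hpq
    (fun x hx => (hderw x hx).continuousAt.continuousWithinAt)
    (fun x hx => hderw x (Set.mem_Icc_of_Ioo hx))
  obtain ⟨ξ', hξ', hDξ'⟩ := exists_hasDerivAt_eq_slope (S^[N+1])
    (fun x => ∏ m ∈ Finset.range (N+1), S' (S^[m] x)) hpq'
    (fun x hx => (hderw' x hx).continuousAt.continuousWithinAt)
    (fun x hx => hderw' x (Set.mem_Icc_of_Ioo hx))
  rw [hpc, hqd] at hDξ
  rw [hpc', hqd'] at hDξ'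
  set jl := w (Fin.last N) with hjl
  set jl' := w' (Fin.last N) with hjl'
  obtain ⟨η, hη, hSη⟩ := exists_hasDerivAt_eq_slope S S' (hab jl)
    (fun x hx => ((hderiv x (hmemU jl x hx)).continuousAt).continuousWithinAt)
    (fun x hx => hderiv x (hmemU jl x (Set.mem_Icc_of_Ioo hx)))
  obtain ⟨η', hη', hSη'⟩ := exists_hasDerivAt_eq_slope S S' (hab jl')
    (fun x hx => ((hderiv x (hmemU jl' x hx)).continuousAt).continuousWithinAt)
    (fun x hx => hderiv x (hmemU jl' x (Set.mem_Icc_of_Ioo hx)))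
  rw [(mono_endpoints hab hcd hderiv hexp himg jl).2.1,
     (mono_endpoints hab hcd hderiv hexp himg jl).2.2] at hSη
  rw [(mono_endpoints hab hcd hderiv hexp himg jl').2.1,
     (mono_endpoints hab hcd hderiv hexp himg jl').2.2] at hSη'
  set F : ℕ → ℝ := fun m => S' (S^[m] ξ) with hF
  set G : ℕ → ℝ := fun m => S' (S^[m] ξ') with hG
  have hmemξ : ∀ m : Fin (N+1), S^[(m:ℕ)] ξ ∈ Set.Icc (a (w m)) (b (w m)) :=
    hmemw ξ (Set.mem_Icc_of_Ioo hξ)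
  have hmemξ' : ∀ m : Fin (N+1), S^[(m:ℕ)] ξ' ∈ Set.Icc (a (w' m)) (b (w' m)) :=
    hmemw' ξ' (Set.mem_Icc_of_Ioo hξ')
  have hF1 : ∀ m : Fin (N+1), 1 < F (m:ℕ) := fun m =>
    hexp _ (hmemU _ _ (hmemξ m))
  have hG1 : ∀ m : Fin (N+1), 1 < G (m:ℕ) := fun m =>
    hexp _ (hmemU _ _ (hmemξ' m))
  have hSη1 : 1 < S' η := hexp _ (hmemU jl η (Set.mem_Icc_of_Ioo hη))
  have hSη'1 : 1 < S' η' := hexp _ (hmemU jl' η' (Set.mem_Icc_of_Ioo hη'))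
  have hcmp : ∀ (j : Fin k) x y, x ∈ Set.Icc (a j) (b j) → y ∈ Set.Icc (a j) (b j) →
      S' x ≤ Real.exp ε * S' y := by
    intro j x y hx hy
    exact exp_bound_of_log (hexp x (hmemU j x hx)) (hexp y (hmemU j y hy))
      (hN j x hx y hy)
  have hFG : ∀ m ∈ Finset.range N, G m ≤ Real.exp ε * F m := by
    intro m hm
    rw [Finset.mem_range] at hm
    have hmlt : m < N + 1 := by omega
    have heq : w ⟨m, hmlt⟩ = w' ⟨m, hmlt⟩ := hlast ⟨m, hmlt⟩ (by simpa using hm)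
    exact hcmp (w ⟨m, hmlt⟩) _ _ (by rw [heq]; exact hmemξ' ⟨m, hmlt⟩) (hmemξ ⟨m, hmlt⟩)
  have hGN : G N ≤ Real.exp ε * S' η' := by
    have h1 : S^[N] ξ' ∈ Set.Icc (a jl') (b jl') := hmemξ' (Fin.last N)
    exact hcmp jl' _ _ h1 (Set.mem_Icc_of_Ioo hη')
  have hηF : S' η ≤ Real.exp ε * F N := by
    have h1 : S^[N] ξ ∈ Set.Icc (a jl) (b jl) := hmemξ (Fin.last N)
    exact hcmp jl _ _ (Set.mem_Icc_of_Ioo hη) h1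
  set PF := ∏ m ∈ Finset.range N, F m with hPF
  set PG := ∏ m ∈ Finset.range N, G m with hPG
  have hFpos : ∀ m ∈ Finset.range N, (0:ℝ) < F m := by
    intro m hm; rw [Finset.mem_range] at hm
    exact lt_trans one_pos (hF1 ⟨m, by omega⟩)
  have hGpos : ∀ m ∈ Finset.range N, (0:ℝ) < G m := by
    intro m hm; rw [Finset.mem_range] at hm
    exact lt_trans one_pos (hG1 ⟨m, by omega⟩)
  have hPFpos : 0 < PF := Finset.prod_pos hFpos
  have hPGpos : 0 < PG := Finset.prod_pos hGpos
  have hFNpos : (0:ℝ) < F N := lt_trans one_pos (hF1 (Fin.last N))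
  have hGNpos : (0:ℝ) < G N := lt_trans one_pos (hG1 (Fin.last N))
  have h1 : PG ≤ Real.exp ((N:ℝ) * ε) * PF := by
    calc PG ≤ ∏ m ∈ Finset.range N, (Real.exp ε * F m) :=
          Finset.prod_le_prod (fun m hm => (hGpos m hm).le) hFG
      _ = Real.exp ε ^ N * PF := by
          rw [Finset.prod_mul_distrib, Finset.prod_const, Finset.card_range]
      _ = Real.exp ((N:ℝ) * ε) * PF := by rw [← Real.exp_nat_mul]
  set DF := ∏ m ∈ Finset.range (N+1), F m with hDF
  set DG := ∏ m ∈ Finset.range (N+1), G m with hDG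
  have hDFpos : 0 < DF := Finset.prod_pos (fun m hm => by
    rw [Finset.mem_range] at hm; exact lt_trans one_pos (hF1 ⟨m, hm⟩))
  have hDGpos : 0 < DG := Finset.prod_pos (fun m hm => by
    rw [Finset.mem_range] at hm; exact lt_trans one_pos (hG1 ⟨m, hm⟩))
  have key2 : DG * S' η ≤ Real.exp (((N:ℝ) + 2) * ε) * (DF * S' η') := by
    calc DG * S' η = (PG * G N) * S' η := by rw [hDG, Finset.prod_range_succ]
      _ ≤ ((Real.exp ((N:ℝ)*ε) * PF) * (Real.exp ε * S' η')) * (Real.exp ε * F N) := by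
          apply mul_le_mul _ hηF (by linarith) (by positivity)
          exact mul_le_mul h1 hGN hGNpos.le (by positivity)
      _ = Real.exp ((N:ℝ)*ε) * Real.exp ε * Real.exp ε * (PF * F N * S' η') := by ring
      _ = Real.exp (((N:ℝ) + 2) * ε) * (DF * S' η') := by
          rw [← Real.exp_add, ← Real.exp_add, hDF, Finset.prod_range_succ]
          rw [← hPF]
          ring_nf
  have key3 : DG * S' η ≤ Real.exp (2 * ((N:ℕ)+1) * ε) * (DF * S' η') := by
    refine key2.trans (mul_le_mul_of_nonneg_right ?_ (by positivity))
    apply Real.exp_le_exp.mpr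
    push_cast
    nlinarith [hε, Nat.cast_nonneg (α := ℝ) N]
  set K := d - c with hK
  have hKpos : 0 < K := by simp [hK]; linarith
  have eDF : DF = K / (q - p) := hDξ
  have eDG : DG = K / (q' - p') := hDξ'
  have eη : S' η = K / (b jl - a jl) := hSη
  have eη' : S' η' = K / (b jl' - a jl') := hSη'
  have hqp : q - p = K / DF := by
    rw [eDF]; field_simp
  have hqp' : q' - p' = K / DG := by
    rw [eDG]; field_simp
  have hbj : b jl - a jl = K / S' η := by
    rw [eη]; field_simp
  have hbj' : b jl' - a jl' = K / S' η' := by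
    rw [eη']; field_simp
  push_cast
  rw [hqp, hqp', hbj, hbj']
  rw [div_mul_div_comm]
  have hrhs : Real.exp (2 * ((N:ℝ)+1) * ε) * (K / DG) * (K / S' η)
      = (Real.exp (2 * ((N:ℝ)+1) * ε) * (K * K)) / (DG * S' η) := by
    field_simp
  rw [hrhs, div_le_div_iff₀ (by positivity) (by positivity)]
  push_cast at key3
  nlinarith [mul_le_mul_of_nonneg_left key3 (le_of_lt (mul_pos hKpos hKpos))]

/-- For S ∈ S¹(I,L) with N(S) ≤ ε, two depth-n cylinder
intervals I_w, I_{w'} corresponding to words differing only in the last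
symbol satisfy
e^{-2nε} ≤ (|I_w|/|I_{w'}|)·(|I_{j'_n}|/|I_{j_n}|)^{-1} ≤ e^{2nε},
stated here in the cross-multiplied form
e^{-2nε}·|I_{w'}|·|I_{j_n}| ≤ |I_w|·|I_{j'_n}| ≤ e^{2nε}·|I_{w'}|·|I_{j_n}|. -/
theorem cylinder_length_comparison
    (k : ℕ) (a b : Fin k → ℝ) (hab : ∀ j, a j < b j)
    (c d : ℝ) (hcd : c < d) (ε : ℝ) (hε : 0 ≤ ε)
    (hdisj : ∀ i j : Fin k, i ≠ j →
      Disjoint (Set.Icc (a i) (b i)) (Set.Icc (a j) (b j)))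
    (hsub : (⋃ j, Set.Icc (a j) (b j)) ⊆ Set.Icc c d)
    (S S' : ℝ → ℝ)
    (hderiv : ∀ x ∈ ⋃ j, Set.Icc (a j) (b j), HasDerivAt S (S' x) x)
    (hcont : ContinuousOn S' (⋃ j, Set.Icc (a j) (b j)))
    (hexp : ∀ x ∈ ⋃ j, Set.Icc (a j) (b j), 1 < S' x)
    (himg : ∀ j, S '' Set.Icc (a j) (b j) = Set.Icc c d)
    (hN : ∀ j : Fin k, ∀ x ∈ Set.Icc (a j) (b j), ∀ y ∈ Set.Icc (a j) (b j),
      Real.log (S' x / S' y) ≤ ε)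
    (n : ℕ) (hn : 1 ≤ n) (w w' : Fin n → Fin k)
    (hlast : ∀ m : Fin n, (m : ℕ) + 1 < n → w m = w' m) :
    Real.exp (-(2 * n * ε)) *
        (volume {x : ℝ | ∀ m : Fin n,
            S^[(m : ℕ)] x ∈ Set.Icc (a (w' m)) (b (w' m))}).toReal *
        (b (w (Fin.last (n-1) |>.cast (by omega))) -
          a (w (Fin.last (n-1) |>.cast (by omega))))
      ≤ (volume {x : ℝ | ∀ m : Fin n,
            S^[(m : ℕ)] x ∈ Set.Icc (a (w m)) (b (w m))}).toReal *
        (b (w' (Fin.last (n-1) |>.cast (by omega))) -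
          a (w' (Fin.last (n-1) |>.cast (by omega)))) ∧
    (volume {x : ℝ | ∀ m : Fin n,
            S^[(m : ℕ)] x ∈ Set.Icc (a (w m)) (b (w m))}).toReal *
        (b (w' (Fin.last (n-1) |>.cast (by omega))) -
          a (w' (Fin.last (n-1) |>.cast (by omega))))
      ≤ Real.exp (2 * n * ε) *
        (volume {x : ℝ | ∀ m : Fin n,
            S^[(m : ℕ)] x ∈ Set.Icc (a (w' m)) (b (w' m))}).toReal *
        (b (w (Fin.last (n-1) |>.cast (by omega))) -
          a (w (Fin.last (n-1) |>.cast (by omega)))) := by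
  obtain ⟨N, rfl⟩ : ∃ N, n = N + 1 := ⟨n - 1, by omega⟩
  have hkey2 := key hab hcd hε hsub hderiv hexp himg hN N w w' hlast
  have hkey1 := key hab hcd hε hsub hderiv hexp himg hN N w' w
    (fun m hm => (hlast m hm).symm)
  set A : ℝ := (volume {x : ℝ | ∀ m : Fin (N+1),
      S^[(m : ℕ)] x ∈ Set.Icc (a (w m)) (b (w m))}).toReal with hA
  set A' : ℝ := (volume {x : ℝ | ∀ m : Fin (N+1),
      S^[(m : ℕ)] x ∈ Set.Icc (a (w' m)) (b (w' m))}).toReal with hA'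
  set B : ℝ := b (w (Fin.last N)) - a (w (Fin.last N)) with hB
  set B' : ℝ := b (w' (Fin.last N)) - a (w' (Fin.last N)) with hB'
  -- hkey1 : A' * B ≤ exp(2(N+1)ε) * A * B'
  -- hkey2 : A * B' ≤ exp(2(N+1)ε) * A' * B
  have hG1 : Real.exp (-(2 * ((N+1 : ℕ) : ℝ) * ε)) * A' * B ≤ A * B' := by
    calc Real.exp (-(2 * ((N+1 : ℕ) : ℝ) * ε)) * A' * B
        = Real.exp (-(2 * ((N+1 : ℕ) : ℝ) * ε)) * (A' * B) := by ring
      _ ≤ Real.exp (-(2 * ((N+1 : ℕ) : ℝ) * ε)) *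
            (Real.exp (2 * ((N+1 : ℕ) : ℝ) * ε) * A * B') :=
          mul_le_mul_of_nonneg_left hkey1 (Real.exp_pos _).le
      _ = (Real.exp (-(2 * ((N+1 : ℕ) : ℝ) * ε)) *
            Real.exp (2 * ((N+1 : ℕ) : ℝ) * ε)) * (A * B') := by ring
      _ = A * B' := by rw [← Real.exp_add]; simp
  exact ⟨hG1, hkey2⟩
end
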